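/- For every infinite sequence (P_i)_{i≥1} of polynomials in K[x_1,…,x_n] such that for each i either P_{i+1} < P_i or P_{i+1} ≈ P_i, there exists an integer m such that P_i ≈ P_m for all i ≥ m; in particular, from index m on all the P_i have the same set of monomials in their supports. -/

import Mathlib

open MvPolynomial

variable {n : ℕ} {K : Type*} [Field K]

/-- Lexicographic order on monomials (exponent vectors) induced by the variable
ordering `x_1 < ⋯ < x_n`: higher-indexed variables are more significant. -/
def MonLt {n : ℕ} (a b : Fin n →₀ ℕ) : Prop :=
  ∃ i : Fin n, a i < b i ∧ ∀ j : Fin n, i < j → a j = b j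

/-- The order `P < Q` on polynomials: `P < Q` iff `lt(P) <_lex lt(Q)`, or the
heading terms agree and the tails satisfy `P - lm(P) < Q - lm(Q)` (with `0 < R`
for every nonzero `R`).  Equivalently (since only supports matter): the supports
of `P` and `Q` differ and the lex-greatest monomial in their symmetric
difference belongs to the support of `Q`. -/
def PoLt (P Q : MvPolynomial (Fin n) K) : Prop :=
  ∃ m ∈ Q.support \ P.support,
    ∀ m' ∈ (P.support \ Q.support) ∪ (Q.support \ P.support), m' ≠ m → MonLt m' m

/-- `P ≈ Q` : neither `P < Q` nor `Q < P`. -/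
def PoEq (P Q : MvPolynomial (Fin n) K) : Prop := ¬ PoLt P Q ∧ ¬ PoLt Q P

/-- The class of a polynomial: the (1-based) index of its leading variable;
`0` for (nonzero) constants. -/
noncomputable def cls (P : MvPolynomial (Fin n) K) : ℕ :=
  P.vars.sup fun i => i.1 + 1

/-- The leading degree of a polynomial: its degree in its leading variable;
`0` for constants. -/
noncomputable def ldeg (P : MvPolynomial (Fin n) K) : ℕ :=
  WithBot.recBotCoe 0 (fun i => P.degreeOf i) P.vars.max

/-- Ranking of polynomials: `P ≺ Q`. -/
def RankLt (P Q : MvPolynomial (Fin n) K) : Prop :=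
  cls P < cls Q ∨ (cls P = cls Q ∧ ldeg P < ldeg Q)

/-- `P ∼ Q` : neither `P ≺ Q` nor `Q ≺ P`. -/
def RankEq (P Q : MvPolynomial (Fin n) K) : Prop := ¬ RankLt P Q ∧ ¬ RankLt Q P

/-- `P` is reduced w.r.t. a nonconstant `Q`: `deg(P, lv(Q)) < ldeg(Q)`. -/
def ReducedWrt (P Q : MvPolynomial (Fin n) K) : Prop :=
  ∀ i : Fin n, Q.vars.max = (i : WithBot (Fin n)) → P.degreeOf i < Q.degreeOf i

/-- A triangular set: a list of nonconstant polynomials with strictly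
increasing leading variables. -/
def IsTriangular (T : List (MvPolynomial (Fin n) K)) : Prop :=
  (∀ P ∈ T, 0 < cls P) ∧ T.Chain' fun P Q => cls P < cls Q

/-- Ranking of triangular sets (as lists): `T ≺ S`. -/
def TriLt (T S : List (MvPolynomial (Fin n) K)) : Prop :=
  (∃ i, i < T.length ∧ i < S.length ∧
      (∀ j < i, RankEq (T.getD j 0) (S.getD j 0)) ∧
      RankLt (T.getD i 0) (S.getD i 0)) ∨
  (S.length < T.length ∧ ∀ j < S.length, RankEq (T.getD j 0) (S.getD j 0))

/-- `T ∼ S` : neither `T ≺ S` nor `S ≺ T`. -/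
def TriEq (T S : List (MvPolynomial (Fin n) K)) : Prop := ¬ TriLt T S ∧ ¬ TriLt S T

/-- An ascending set: either a triangular set in which every element is reduced
w.r.t. all earlier elements (non-contradictory), or a single nonzero constant
(contradictory). -/
def IsAscending (A : List (MvPolynomial (Fin n) K)) : Prop :=
  (IsTriangular A ∧ A.Pairwise fun P Q => ReducedWrt Q P) ∨
  ∃ a : K, a ≠ 0 ∧ A = [MvPolynomial.C a]

/-- A basic set of a polynomial set `S`: an ascending set contained in `S`
such that no ascending set contained in `S` has strictly lower ranking. -/
def IsBasicSet (B : List (MvPolynomial (Fin n) K))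
    (S : Set (MvPolynomial (Fin n) K)) : Prop :=
  IsAscending B ∧ (∀ b ∈ B, b ∈ S) ∧
    ∀ B' : List (MvPolynomial (Fin n) K),
      IsAscending B' → (∀ b ∈ B', b ∈ S) → ¬ TriLt B' B

/-- A medial set of a polynomial set `S`: an ascending set contained in the
ideal `⟨S⟩` whose ranking is not higher than that of any basic set of `S`. -/
def IsMedialSet (M : List (MvPolynomial (Fin n) K))
    (S : Set (MvPolynomial (Fin n) K)) : Prop :=
  IsAscending M ∧ (∀ F ∈ M, F ∈ Ideal.span S) ∧
    ∀ B : List (MvPolynomial (Fin n) K), IsBasicSet B S → ¬ TriLt B M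

/-- The leading coefficient of `P` regarded as a univariate polynomial in
`x_q`, as a polynomial in the remaining variables. -/
noncomputable def lcOf (P : MvPolynomial (Fin n) K) (q : Fin n) :
    MvPolynomial (Fin n) K :=
  ∑ m ∈ P.support.filter fun m => m q = P.degreeOf q,
    MvPolynomial.monomial (m.erase q) (P.coeff m)

/-- The initial of `P`: its leading coefficient w.r.t. its leading variable. -/
noncomputable def initOf (P : MvPolynomial (Fin n) K) : MvPolynomial (Fin n) K :=
  WithBot.recBotCoe P (fun q => lcOf P q) P.vars.max
section Aux

variable {n : ℕ}

lemma monLt_irrefl (a : Fin n →₀ ℕ) : ¬ MonLt a a := fun ⟨_, h, _⟩ => lt_irrefl _ h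

lemma monLt_trans {a b c : Fin n →₀ ℕ} (hab : MonLt a b) (hbc : MonLt b c) : MonLt a c := by
  obtain ⟨i, hi, hi'⟩ := hab
  obtain ⟨k, hk, hk'⟩ := hbc
  rcases lt_trichotomy i k with h | h | h
  · exact ⟨k, by rw [hi' k h]; exact hk, fun j hj => (hi' j (h.trans hj)).trans (hk' j hj)⟩
  · subst h; exact ⟨i, hi.trans hk, fun j hj => (hi' j hj).trans (hk' j hj)⟩
  · exact ⟨i, by rw [← hk' i h]; exact hi, fun j hj => (hi' j hj).trans (hk' j (h.trans hj))⟩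

lemma monLt_asymm {a b : Fin n →₀ ℕ} (hab : MonLt a b) : ¬ MonLt b a :=
  fun h => monLt_irrefl a (monLt_trans hab h)

lemma monLt_trichot {a b : Fin n →₀ ℕ} (hab : a ≠ b) : MonLt a b ∨ MonLt b a := by
  classical
  have hne : ∃ i, a i ≠ b i := by
    by_contra hc; push_neg at hc; exact hab (Finsupp.ext hc)
  have hmem : ∀ j : Fin n, a j ≠ b j → j ∈ (a.support ∪ b.support).filter (fun i => a i ≠ b i) := by
    intro j hj
    refine Finset.mem_filter.2 ⟨?_, hj⟩
    rcases eq_or_ne (a j) 0 with h0 | h0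
    · exact Finset.mem_union_right _ (Finsupp.mem_support_iff.2 (by rw [← h0]; exact fun h => hj h.symm))
    · exact Finset.mem_union_left _ (Finsupp.mem_support_iff.2 h0)
  set D : Finset (Fin n) := (a.support ∪ b.support).filter (fun i => a i ≠ b i) with hD
  have hDne : D.Nonempty := hne.imp hmem
  set i := D.max' hDne with hi
  have hineq : a i ≠ b i := (Finset.mem_filter.1 (D.max'_mem hDne)).2
  have htail : ∀ j, i < j → a j = b j := fun j hj => by
    by_contra hc
    exact absurd (Finset.le_max' D j (hmem j hc)) (not_le.2 hj)
  rcases lt_or_gt_of_ne hineq with h | h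
  · exact Or.inl ⟨i, h, htail⟩
  · exact Or.inr ⟨i, h, fun j hj => (htail j hj).symm⟩

lemma monLt_wf : WellFounded (MonLt (n := n)) := by
  have : IsTrichotomous (Fin n) (Function.swap (· < ·)) := ⟨fun a b h1 h2 => by
    rcases lt_trichotomy a b with h | h | h
    exacts [absurd h h2, h, absurd h h1]⟩
  have hlex : WellFounded (Finsupp.Lex (Function.swap ((· < ·) : Fin n → Fin n → Prop))
      ((· < ·) : ℕ → ℕ → Prop)) :=
    Finsupp.Lex.wellFounded' (fun k => Nat.not_lt_zero k) (Nat.lt_wfRel.wf)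
      (wellFounded_lt (α := Fin n))
  refine Subrelation.wf (r := Finsupp.Lex (Function.swap (· < ·)) (· < ·)) ?_ hlex
  rintro a b ⟨i, h1, h2⟩
  exact ⟨i, fun d hd => h2 d hd, h1⟩

/-- Every nonempty finset of monomials has a `MonLt`-greatest element. -/
lemma exists_monMax (s : Finset (Fin n →₀ ℕ)) (hs : s.Nonempty) :
    ∃ m ∈ s, ∀ m' ∈ s, m' ≠ m → MonLt m' m := by
  classical
  induction s using Finset.induction_on with
  | empty => exact absurd hs (by simp)
  | @insert a s ha IH =>
    rcases s.eq_empty_or_nonempty with rfl | hne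
    · exact ⟨a, by simp, by simp⟩
    · obtain ⟨m, hm, hmax⟩ := IH hne
      have ham : a ≠ m := fun h => ha (h ▸ hm)
      rcases monLt_trichot ham with h | h
      · refine ⟨m, Finset.mem_insert_of_mem hm, ?_⟩
        intro m' hm' hne'
        rcases Finset.mem_insert.1 hm' with rfl | hm's
        · exact h
        · exact hmax m' hm's hne'
      · refine ⟨a, Finset.mem_insert_self a s, ?_⟩
        intro m' hm' hne'
        rcases Finset.mem_insert.1 hm' with rfl | hm's
        · exact absurd rfl hne'
        · rcases eq_or_ne m' m with rfl | hne''
          · exact h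
          · exact monLt_trans (hmax m' hm's hne'') h

/-- Colex-type relation on finsets of monomials; `PoLt P Q` is definitionally
`SLt P.support Q.support`. -/
def SLt (s t : Finset (Fin n →₀ ℕ)) : Prop :=
  ∃ m ∈ t \ s, ∀ m' ∈ (s \ t) ∪ (t \ s), m' ≠ m → MonLt m' m

lemma sLt_irrefl (s : Finset (Fin n →₀ ℕ)) : ¬ SLt s s := by
  rintro ⟨m, hm, -⟩; simp at hm

lemma sLt_trichot {s t : Finset (Fin n →₀ ℕ)} (hst : s ≠ t) : SLt s t ∨ SLt t s := by
  classical
  have hne : ((s \ t) ∪ (t \ s)).Nonempty := by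
    rw [Finset.nonempty_iff_ne_empty]
    intro h
    rw [Finset.union_eq_empty] at h
    exact hst (Finset.Subset.antisymm (Finset.sdiff_eq_empty_iff_subset.1 h.1)
      (Finset.sdiff_eq_empty_iff_subset.1 h.2))
  obtain ⟨m, hm, hmax⟩ := exists_monMax _ hne
  rcases Finset.mem_union.1 hm with hm' | hm'
  · exact Or.inr ⟨m, hm', fun m' h1 h2 => hmax m' (by
      rcases Finset.mem_union.1 h1 with h | h
      exacts [Finset.mem_union_right _ h, Finset.mem_union_left _ h]) h2⟩
  · exact Or.inl ⟨m, hm', hmax⟩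

/-- `SLt` embeds into the lexicographic order on indicator finsupps, hence is well-founded. -/
lemma sLt_wf : WellFounded (SLt (n := n)) := by
  classical
  have htri : IsTrichotomous (Fin n →₀ ℕ) (Function.swap MonLt) := ⟨fun a b h1 h2 => by
    rcases eq_or_ne a b with rfl | h
    · exact rfl
    · rcases monLt_trichot h with h' | h'
      exacts [absurd h' h2, absurd h' h1]⟩
  have hlex : WellFounded (Finsupp.Lex (Function.swap (MonLt (n := n)))
      ((· < ·) : ℕ → ℕ → Prop)) :=
    Finsupp.Lex.wellFounded' (fun k => Nat.not_lt_zero k) (Nat.lt_wfRel.wf) monLt_wf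
  have hinv : WellFounded (InvImage (Finsupp.Lex (Function.swap (MonLt (n := n))) (· < ·))
      (fun s : Finset (Fin n →₀ ℕ) => Finsupp.indicator s (fun _ _ => (1 : ℕ)))) :=
    InvImage.wf _ hlex
  refine Subrelation.wf ?_ hinv
  rintro s t ⟨m, hm, hmax⟩
  rw [Finset.mem_sdiff] at hm
  refine ⟨m, ?_, ?_⟩
  · intro d hd
    have hiff : d ∈ s ↔ d ∈ t := by
      by_contra hc
      have hdm : d ≠ m := fun h => monLt_irrefl m (h ▸ hd)
      have hdu : d ∈ (s \ t) ∪ (t \ s) := by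
        rcases Decidable.em (d ∈ s) with h1 | h1
        · exact Finset.mem_union_left _ (Finset.mem_sdiff.2 ⟨h1, fun h2 => hc ⟨fun _ => h2, fun _ => h1⟩⟩)
        · have h2 : d ∈ t := by
            by_contra h2
            exact hc ⟨fun h => absurd h h1, fun h => absurd h h2⟩
          exact Finset.mem_union_right _ (Finset.mem_sdiff.2 ⟨h2, h1⟩)
      exact monLt_asymm hd (hmax d hdu hdm)
    by_cases hds : d ∈ s
    · rw [Finsupp.indicator_of_mem hds, Finsupp.indicator_of_mem (hiff.1 hds)]
    · rw [Finsupp.indicator_of_notMem hds, Finsupp.indicator_of_notMem (fun h => hds (hiff.2 h))]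
  · rw [Finsupp.indicator_of_notMem hm.2, Finsupp.indicator_of_mem hm.1]
    exact Nat.zero_lt_one

/-- A sequence that at each step either strictly decreases (w.r.t. a well-founded
relation) or stays equal is eventually constant. -/
lemma stab {α : Type*} {r : α → α → Prop} (hwf : WellFounded r) (Q : ℕ → α)
    (h : ∀ i, r (Q (i + 1)) (Q i) ∨ Q (i + 1) = Q i) :
    ∃ m, ∀ i, m ≤ i → Q i = Q m := by
  suffices key : ∀ s : α, ∀ Q : ℕ → α, (∀ i, r (Q (i + 1)) (Q i) ∨ Q (i + 1) = Q i) →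
      Q 0 = s → ∃ m, ∀ i, m ≤ i → Q i = Q m from key (Q 0) Q h rfl
  intro s
  induction s using WellFounded.induction hwf with
  | _ s IH =>
    intro Q hQ hQ0
    by_cases hdec : ∃ i, ¬ Q (i + 1) = Q i
    · classical
      set i := Nat.find hdec with hidef
      have heq0 : ∀ j, j ≤ i → Q j = Q 0 := by
        intro j hj
        induction j with
        | zero => rfl
        | succ k IHk =>
          have hk : ¬ ¬ Q (k + 1) = Q k := Nat.find_min hdec (lt_of_lt_of_le (Nat.lt_succ_self k) hj)
          rw [not_not.1 hk]
          exact IHk (le_trans (Nat.le_succ k) hj)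
      have hri : r (Q (i + 1)) (Q i) := (hQ i).resolve_right (Nat.find_spec hdec)
      have hrs : r (Q (i + 1)) s := by rw [← hQ0, ← heq0 i le_rfl]; exact hri
      obtain ⟨m, hm⟩ := IH (Q (i + 1)) hrs (fun j => Q (i + 1 + j))
        (fun j => by rw [← Nat.add_assoc]; exact hQ (i + 1 + j)) rfl
      refine ⟨i + 1 + m, fun k hk => ?_⟩
      have hk' : k = i + 1 + (k - (i + 1)) := by omega
      rw [hk']
      exact hm _ (by omega)
    · push_neg at hdec
      have hconst : ∀ j, Q j = Q 0 := by
        intro j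
        induction j with
        | zero => rfl
        | succ k IH2 => rw [hdec k, IH2]
      exact ⟨0, fun k _ => hconst k⟩

end Aux

/-- any `≳`-decreasing sequence of polynomials stabilizes up to `≈`;
in particular from some index on all terms have the same set of monomials. -/
theorem poLt_sequence_stabilizes
    {n : ℕ} {K : Type*} [Field K] (hn : 1 ≤ n)
    (P : ℕ → MvPolynomial (Fin n) K)
    (h : ∀ i, PoLt (P (i + 1)) (P i) ∨ PoEq (P (i + 1)) (P i)) :
    ∃ m : ℕ, ∀ i, m ≤ i → PoEq (P i) (P m) ∧ (P i).support = (P m).support := by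
  have hstep : ∀ i, SLt ((P (i + 1)).support) ((P i).support) ∨
      (P (i + 1)).support = (P i).support := by
    intro i
    rcases h i with hlt | heq
    · exact Or.inl hlt
    · right
      by_contra hne
      rcases sLt_trichot hne with hl | hl
      · exact heq.1 hl
      · exact heq.2 hl
  obtain ⟨m, hm⟩ := stab sLt_wf (fun i => (P i).support) hstep
  refine ⟨m, fun i hi => ?_⟩
  have hsupp : (P i).support = (P m).support := hm i hi
  refine ⟨⟨?_, ?_⟩, hsupp⟩
  · intro hl
    exact sLt_irrefl (P m).support (by rwa [show PoLt (P i) (P m) = SLt (P i).support (P m).support from rfl, hsupp] at hl)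
  · intro hl
    exact sLt_irrefl (P m).support (by rwa [show PoLt (P m) (P i) = SLt (P m).support (P i).support from rfl, hsupp] at hl)
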